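/- Let p, q be integers with 0 < p < q, and let ξ, w₀ ∈ ℂ with ξ ≠ 0. Then the following are equivalent: (a) (w₀ − 1)^(q−p) · w₀^p · ξ^q = 1 and (q−p)·(w₀ − 1)^(q−p−1) · w₀^p + p·(w₀ − 1)^(q−p) · w₀^(p−1) = 0 (i.e., w₀ is a repeated root of the polynomial (w − 1)^(q−p) w^p ξ^q − 1); (b) w₀ = p/q and ξ^q · p^p · (q−p)^(q−p) = (−1)^(q−p) · q^q. In particular all movable branch points of the curve occur at w = μ = p/q, and there are exactly q of them, given by the q solutions ξ of ξ^q = (−1)^(q−p) q^q / (p^p (q−p)^(q−p)). -/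

import Mathlib

/-- Characterization of the movable branch points of the curve
(w-1)^(q-p) w^p ξ^q = 1: w₀ is a repeated root of the polynomial in w iff
w₀ = p/q and ξ^q p^p (q-p)^(q-p) = (-1)^(q-p) q^q. -/
theorem movable_branch_points (p q : ℕ) (hp : 0 < p) (hpq : p < q)
    (ξ w₀ : ℂ) (hξ : ξ ≠ 0) :
    ((w₀ - 1) ^ (q - p) * w₀ ^ p * ξ ^ q = 1 ∧
      ((q : ℂ) - (p : ℂ)) * (w₀ - 1) ^ (q - p - 1) * w₀ ^ p
        + (p : ℂ) * (w₀ - 1) ^ (q - p) * w₀ ^ (p - 1) = 0)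
    ↔ (w₀ = (p : ℂ) / (q : ℂ) ∧
      ξ ^ q * (p : ℂ) ^ p * ((q : ℂ) - (p : ℂ)) ^ (q - p)
        = (-1) ^ (q - p) * (q : ℂ) ^ q) := by
  obtain ⟨e, rfl⟩ : ∃ e, p = e + 1 := ⟨p - 1, by omega⟩
  obtain ⟨d, rfl⟩ : ∃ d, q = (e + 1) + (d + 1) := ⟨q - (e + 1) - 1, by omega⟩
  have hq0 : (((e + 1) + (d + 1) : ℕ) : ℂ) ≠ 0 := Nat.cast_ne_zero.2 (by omega)
  push_cast at hq0 ⊢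
  simp only [show (e + 1) + (d + 1) - (e + 1) = d + 1 from by omega,
    show d + 1 - 1 = d from rfl, show e + 1 - 1 = e from rfl]
  have hs : ((-1 : ℂ)) ^ (d + 1) * (-1) ^ (d + 1) = 1 := by
    rw [← pow_add, ← two_mul, pow_mul]; norm_num
  constructor
  · rintro ⟨h1, h2⟩
    have hw0 : w₀ ≠ 0 := by
      intro h; rw [h] at h1; simp at h1
    have hw1 : w₀ - 1 ≠ 0 := by
      intro h; rw [h] at h1; simp at h1
    have hfac : (w₀ - 1) ^ d * w₀ ^ e *
        (((e : ℂ) + (d : ℂ) + 2) * w₀ - ((e : ℂ) + 1)) = 0 := by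
      linear_combination h2
    have hlin : ((e : ℂ) + (d : ℂ) + 2) * w₀ - ((e : ℂ) + 1) = 0 := by
      rcases mul_eq_zero.1 hfac with h | h
      · rcases mul_eq_zero.1 h with h' | h'
        · exact absurd h' (pow_ne_zero _ hw1)
        · exact absurd h' (pow_ne_zero _ hw0)
      · exact h
    have hw : w₀ = ((e : ℂ) + 1) / ((e : ℂ) + 1 + ((d : ℂ) + 1)) := by
      field_simp
      linear_combination hlin
    refine ⟨hw, ?_⟩
    rw [hw] at h1
    rw [show ((e : ℂ) + 1) / ((e : ℂ) + 1 + ((d : ℂ) + 1)) - 1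
        = -(((d : ℂ) + 1) / ((e : ℂ) + 1 + ((d : ℂ) + 1))) from by
      field_simp; ring] at h1
    rw [neg_pow, div_pow, div_pow] at h1
    field_simp at h1
    linear_combination (-1 : ℂ) ^ (d + 1) * h1 +
      (-(((e:ℂ)+1)^(e+1) * ((d:ℂ)+1)^(d+1) * ξ^(e+1+(d+1)))) * hs
  · rintro ⟨hw, hξeq⟩
    have hlin : ((e : ℂ) + 1 + ((d : ℂ) + 1)) * w₀ - ((e : ℂ) + 1) = 0 := by
      rw [hw]; field_simp; ring
    constructor
    · rw [hw]
      rw [show ((e : ℂ) + 1) / ((e : ℂ) + 1 + ((d : ℂ) + 1)) - 1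
          = -(((d : ℂ) + 1) / ((e : ℂ) + 1 + ((d : ℂ) + 1))) from by
        field_simp; ring]
      rw [neg_pow, div_pow, div_pow]
      field_simp
      linear_combination ((-1 : ℂ) ^ (d + 1)) * hξeq +
        (((e:ℂ)+1+((d:ℂ)+1))^(e+1+(d+1))) * hs
    · linear_combination ((w₀ - 1) ^ d * w₀ ^ e) * hlin
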